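/- For every k ≥ 2, the set of Pauli polynomials of degree at most k equals the k-th level of the Clifford hierarchy: P^{(k)} = C^{(k)}. -/

import Mathlib

open Matrix Complex

namespace CH

variable (d n : ℕ) [NeZero d]

/-- Phase space `F_d^{2n}`, written as pairs `(u, v)` with `u, v ∈ F_d^n`. -/
abbrev PSpace := (Fin n → ZMod d) × (Fin n → ZMod d)

/-- Linear maps on `ℂ^{F_d^n}`, as matrices. -/
abbrev Mat := Matrix (Fin n → ZMod d) (Fin n → ZMod d) ℂ

/-- `ω = e^{2πi/d}`. -/
noncomputable def omg : ℂ := Complex.exp (2 * Real.pi * Complex.I / d)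

/-- `τ = (-1)^d e^{iπ/d}`. -/
noncomputable def tau : ℂ := (-1 : ℂ) ^ d * Complex.exp (Real.pi * Complex.I / d)

/-- `D = 2d` if `d = 2`, else `D = d`. -/
def Dd : ℕ := if d = 2 then 4 else d

/-- The translation operator `X^v`, with `X^v |u⟩ = |u + v⟩`. -/
noncomputable def Xop (v : Fin n → ZMod d) : Mat d n :=
  Matrix.of fun u u' => if u = u' + v then 1 else 0

/-- The phase operator `Z^v`, with `Z^v |u⟩ = ω^{u·v} |u⟩`. -/
noncomputable def Zop (v : Fin n → ZMod d) : Mat d n :=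
  Matrix.diagonal fun u => omg d ^ (∑ i, u i * v i : ZMod d).val

/-- The Weyl operator `W_{(u,v)} = τ^{-(|u₁v₁| + ⋯ + |uₙvₙ|)} Z^u X^v`. -/
noncomputable def Weyl (a : PSpace d n) : Mat d n :=
  tau d ^ (-(∑ i, ((a.1 i * a.2 i).val : ℤ))) • (Zop d n a.1 * Xop d n a.2)

/-- Normalized trace inner product `⟨A,B⟩ = d^{-n} tr(A* B)`. -/
noncomputable def trInner (A B : Mat d n) : ℂ := ((d : ℂ) ^ n)⁻¹ * (Aᴴ * B).trace

/-- Normalized Frobenius norm `‖A‖₂ = ⟨A,A⟩^{1/2}`. -/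
noncomputable def hsNorm (A : Mat d n) : ℝ := Real.sqrt (trInner d n A A).re

/-- Pauli derivative `∂_h U = W_h U W_h* U*`. -/
noncomputable def pderiv (h : PSpace d n) (U : Mat d n) : Mat d n :=
  Weyl d n h * U * (Weyl d n h)ᴴ * Uᴴ

/-- The quantity `‖U‖_{P^k}^{2^k} = E_{h₁,…,h_k} d^{-n} tr(∂_{h_k} ⋯ ∂_{h₁} U)`. -/
noncomputable def pq : ℕ → Mat d n → ℂ
  | 0, U => ((d : ℂ) ^ n)⁻¹ * U.trace
  | (k+1), U => ((d : ℂ) ^ (2*n))⁻¹ * ∑ h : PSpace d n, pq k (pderiv d n h U)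

/-- The `k`-th Pauli uniformity norm `‖U‖_{P^k}`, the `2^k`-th root of `pq k U`. -/
noncomputable def pnorm (k : ℕ) (U : Mat d n) : ℝ := (pq d n k U).re ^ (((2:ℝ) ^ k)⁻¹)

/-- The Pauli group `C^{(1)} = {τ^p W_h : p ∈ Z_D, h ∈ F_d^{2n}}`. -/
def pauliGroup : Set (Mat d n) :=
  {U | ∃ (p : ℕ) (h : PSpace d n), U = tau d ^ p • Weyl d n h}

/-- The Clifford hierarchy. -/
def cliff : ℕ → Set (Mat d n)
  | 0 => {U | ∃ θ : ℝ, U = Complex.exp (θ * Complex.I) • (1 : Mat d n)}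
  | 1 => pauliGroup d n
  | (k+2) => {U | U ∈ unitary (Mat d n) ∧
      ∀ P ∈ pauliGroup d n, U * P * Uᴴ ∈ cliff (k+1)}

/-- Pauli polynomials of degree at most `k`. -/
def ppoly : ℕ → Set (Mat d n)
  | 0 => {U | ∃ θ : ℝ, U = Complex.exp (θ * Complex.I) • (1 : Mat d n)}
  | (k+1) => {U | U ∈ unitary (Mat d n) ∧ ∀ h : PSpace d n, pderiv d n h U ∈ ppoly k}

/-- Symplectic form `[(u,v),(u',v')] = u·v' - u'·v` on `F_d^{2n}`. -/
def symp (a b : PSpace d n) : ZMod d :=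
  (∑ i, a.1 i * b.2 i) - (∑ i, b.1 i * a.2 i)

/-- Multiplication of the Heisenberg group. -/
def heisMul (β : PSpace d n → PSpace d n → ZMod (Dd d))
    (x y : ZMod (Dd d) × PSpace d n) : ZMod (Dd d) × PSpace d n :=
  (x.1 + y.1 + β x.2 y.2, x.2 + y.2)

set_option linter.unusedSectionVars false

section Scalars

variable (d : ℕ) [NeZero d]

lemma omg_ne_zero : omg d ≠ 0 := Complex.exp_ne_zero _

lemma tau_ne_zero : tau d ≠ 0 :=
  mul_ne_zero (pow_ne_zero _ (neg_ne_zero.mpr one_ne_zero)) (Complex.exp_ne_zero _)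

lemma tau_sq : tau d ^ 2 = omg d := by
  rw [tau, omg, mul_pow, ← pow_mul, mul_comm d 2, pow_mul]
  norm_num
  rw [← Complex.exp_nat_mul]
  congr 1
  ring

lemma omg_pow_d : omg d ^ d = 1 := by
  rw [omg, ← Complex.exp_nat_mul]
  rw [show (d : ℂ) * (2 * (Real.pi:ℂ) * Complex.I / d) = 2 * Real.pi * Complex.I by
    rw [mul_div_assoc']
    exact mul_div_cancel_left₀ _ (Nat.cast_ne_zero.mpr (NeZero.ne d))]
  exact Complex.exp_two_pi_mul_I

lemma tau_pow_2d : tau d ^ (2 * d) = 1 := by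
  rw [pow_mul, tau_sq, omg_pow_d]

lemma star_tau_mul : (starRingEnd ℂ) (tau d) * tau d = 1 := by
  rw [tau, _root_.map_mul, map_pow, map_neg, _root_.map_one, ← Complex.exp_conj]
  have h : (starRingEnd ℂ) ((Real.pi:ℂ) * Complex.I / d) = -((Real.pi:ℂ) * Complex.I / d) := by
    simp [div_eq_mul_inv, mul_comm, Complex.conj_I]
  rw [h, mul_mul_mul_comm, ← Complex.exp_add, neg_add_cancel, Complex.exp_zero, mul_one,
    ← mul_pow, neg_mul_neg, one_mul, one_pow]

lemma star_tau : (starRingEnd ℂ) (tau d) = tau d ^ (2 * d - 1) := by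
  have h1 : (1:ℕ) ≤ 2 * d := by have := Nat.one_le_iff_ne_zero.2 (NeZero.ne d); omega
  have : tau d ^ (2 * d - 1) * tau d = 1 := by
    rw [← pow_succ, Nat.sub_add_cancel h1, tau_pow_2d]
  rw [eq_inv_of_mul_eq_one_left (star_tau_mul d), eq_inv_of_mul_eq_one_left this]

lemma omg_pow_mod (a : ℕ) : omg d ^ (a % d) = omg d ^ a := by
  conv_rhs => rw [← Nat.div_add_mod a d]
  rw [pow_add, pow_mul, omg_pow_d, one_pow, one_mul]

lemma omg_pow_congr {a b : ℕ} (h : (a : ZMod d) = (b : ZMod d)) :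
    omg d ^ a = omg d ^ b := by
  rw [← omg_pow_mod d a, ← omg_pow_mod d b, (ZMod.natCast_eq_natCast_iff' a b d).mp h]

lemma tau_zpow_nat (z : ℤ) : ∃ p : ℕ, tau d ^ z = tau d ^ p := by
  have h2d : (0:ℤ) < 2 * d := by
    have := Nat.one_le_iff_ne_zero.2 (NeZero.ne d); positivity
  refine ⟨(z % (2 * d)).toNat, ?_⟩
  conv_lhs => rw [← Int.emod_add_mul_ediv z (2 * d)]
  rw [zpow_add₀ (tau_ne_zero d), _root_.zpow_mul]
  have : (tau d) ^ ((2 * d : ℕ) : ℤ) = 1 := by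
    rw [zpow_natCast, tau_pow_2d]
  rw [show ((2:ℤ) * d) = ((2 * d : ℕ) : ℤ) by push_cast; ring] at *
  rw [this, _root_.one_zpow, mul_one, ← zpow_natCast]
  congr 1
  exact (Int.toNat_of_nonneg (Int.emod_nonneg _ (by positivity))).symm

lemma tau_pow_exp (p : ℕ) : ∃ θ : ℝ, tau d ^ p = Complex.exp (θ * Complex.I) := by
  have hτ : tau d = Complex.exp (((d * Real.pi + Real.pi / d : ℝ)) * Complex.I) := by
    rw [tau, show ((-1:ℂ)) = Complex.exp (Real.pi * Complex.I) from (Complex.exp_pi_mul_I).symm,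
      ← Complex.exp_nat_mul, ← Complex.exp_add]
    congr 1
    push_cast
    ring
  refine ⟨p * (d * Real.pi + Real.pi / d), ?_⟩
  rw [hτ, ← Complex.exp_nat_mul]
  congr 1
  push_cast
  ring

end Scalars
set_option linter.unusedSectionVars false

/-- character `x ↦ ω^{x.val}` -/
noncomputable def wch (x : ZMod d) : ℂ := omg d ^ x.val

lemma omg_star_mul : (starRingEnd ℂ) (omg d) * omg d = 1 := by
  rw [omg, ← Complex.exp_conj, ← Complex.exp_add]
  have : (starRingEnd ℂ) (2 * (Real.pi:ℂ) * Complex.I / d) = -(2 * (Real.pi:ℂ) * Complex.I / d) := by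
    rw [map_div₀, _root_.map_mul, _root_.map_mul, Complex.conj_I, Complex.conj_ofReal,
      map_ofNat, map_natCast]
    ring
  rw [this, neg_add_cancel, Complex.exp_zero]

lemma wch_zero : wch d (0 : ZMod d) = 1 := by
  rw [wch, ZMod.val_zero, pow_zero]

lemma wch_add (x y : ZMod d) : wch d (x + y) = wch d x * wch d y := by
  rw [wch, wch, wch, ZMod.val_add, omg_pow_mod, pow_add]

lemma wch_ne_zero (x : ZMod d) : wch d x ≠ 0 := pow_ne_zero _ (omg_ne_zero d)

lemma wch_neg_mul (x : ZMod d) : wch d x * wch d (-x) = 1 := by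
  rw [← wch_add, add_neg_cancel, wch_zero]

lemma star_wch (x : ZMod d) : (starRingEnd ℂ) (wch d x) = wch d (-x) := by
  have h1 : (starRingEnd ℂ) (wch d x) * wch d x = 1 := by
    rw [wch, map_pow, ← mul_pow, omg_star_mul, one_pow]
  rw [eq_inv_of_mul_eq_one_left h1]
  have h2 := wch_neg_mul d x
  rw [mul_comm] at h2
  rw [eq_inv_of_mul_eq_one_left h2]

lemma wch_eq_one {x : ZMod d} (h : wch d x = 1) : x = 0 := by
  rw [wch] at h
  have hdvd := ((Complex.isPrimitiveRoot_exp d (NeZero.ne d)).pow_eq_one_iff_dvd _).mp h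
  rcases Nat.eq_zero_or_pos x.val with h0 | hpos
  · exact (ZMod.val_eq_zero x).mp h0
  · exact absurd (Nat.le_of_dvd hpos hdvd) (not_le.mpr (ZMod.val_lt x))

lemma wch_isTau (x : ZMod d) : wch d x = tau d ^ (2 * x.val) := by
  rw [pow_mul, tau_sq, wch]

/-- dot product -/
def dt (a b : Fin n → ZMod d) : ZMod d := ∑ i, a i * b i

lemma dt_comm (a b : Fin n → ZMod d) : dt d n a b = dt d n b a := by
  simp [dt, mul_comm]

lemma dt_add_left (a b c : Fin n → ZMod d) : dt d n (a + b) c = dt d n a c + dt d n b c := by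
  simp [dt, add_mul, Finset.sum_add_distrib]

lemma dt_add_right (a b c : Fin n → ZMod d) : dt d n a (b + c) = dt d n a b + dt d n a c := by
  simp [dt, mul_add, Finset.sum_add_distrib]

lemma dt_neg_left (a b : Fin n → ZMod d) : dt d n (-a) b = - dt d n a b := by
  simp [dt]

lemma dt_neg_right (a b : Fin n → ZMod d) : dt d n a (-b) = - dt d n a b := by
  simp [dt]

lemma dt_single (a : Fin n → ZMod d) (i : Fin n) : dt d n a (Pi.single i 1) = a i := by
  simp [dt, Pi.single_apply, mul_ite, Finset.sum_ite_eq']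

lemma Zop_eq (v : Fin n → ZMod d) :
    Zop d n v = Matrix.diagonal fun u => wch d (dt d n u v) := rfl

lemma Xop_zero : Xop d n 0 = 1 := by
  ext a b
  simp [Xop, Matrix.one_apply]

lemma Zop_zero : Zop d n 0 = 1 := by
  rw [Zop_eq]
  have : (fun u : Fin n → ZMod d => wch d (dt d n u 0)) = fun _ => 1 := by
    funext u
    simp [dt, wch_zero]
  rw [this, Matrix.diagonal_one]

lemma Xop_mul (v w : Fin n → ZMod d) : Xop d n v * Xop d n w = Xop d n (v + w) := by
  ext a b
  rw [Matrix.mul_apply]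
  simp only [Xop, Matrix.of_apply]
  rw [Finset.sum_eq_single (b + w)]
  · simp [show b + w + v = b + (v + w) by rw [add_assoc, add_comm w v]]
  · intro c _ hc
    simp [hc]
  · intro h
    exact absurd (Finset.mem_univ _) h

lemma Zop_mul (u u' : Fin n → ZMod d) : Zop d n u * Zop d n u' = Zop d n (u + u') := by
  rw [Zop_eq, Zop_eq, Zop_eq, Matrix.diagonal_mul_diagonal]
  have : (fun i => wch d (dt d n i u) * wch d (dt d n i u'))
      = fun i => wch d (dt d n i (u + u')) := by
    funext a
    rw [dt_add_right, wch_add]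
  rw [this]

lemma Xop_conjT (v : Fin n → ZMod d) : (Xop d n v)ᴴ = Xop d n (-v) := by
  ext a b
  simp only [Matrix.conjTranspose_apply, Xop, Matrix.of_apply]
  by_cases h : b = a + v
  · subst h
    simp [add_neg_cancel_right]
  · have h2 : ¬(a = a + v + -v) → True := fun _ => trivial
    have h3 : a ≠ b + -v := by
      intro hh
      exact h (by rw [hh]; abel)
    simp [h, h3]

lemma Zop_conjT (u : Fin n → ZMod d) : (Zop d n u)ᴴ = Zop d n (-u) := by
  rw [Zop_eq, Zop_eq, Matrix.diagonal_conjTranspose]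
  have : (star fun u_1 => wch d (dt d n u_1 u)) = fun u_1 => wch d (dt d n u_1 (-u)) := by
    funext a
    rw [Pi.star_apply, RCLike.star_def, star_wch, dt_neg_right]
  rw [this]

lemma Z_mul_X (u v : Fin n → ZMod d) :
    Zop d n u * Xop d n v = wch d (dt d n v u) • (Xop d n v * Zop d n u) := by
  ext a b
  rw [Zop_eq, Matrix.smul_apply, Matrix.diagonal_mul, Matrix.mul_diagonal]
  by_cases h : a = b + v
  · subst h
    simp only [Xop, Matrix.of_apply, if_pos rfl, mul_one, one_mul, smul_eq_mul]
    rw [dt_add_left, wch_add]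
    ring
  · simp [Xop, h]

lemma X_mul_Z (u v : Fin n → ZMod d) :
    Xop d n v * Zop d n u = wch d (-(dt d n v u)) • (Zop d n u * Xop d n v) := by
  rw [Z_mul_X, smul_smul, mul_comm, wch_neg_mul, one_smul]
/-- integer exponent in the Weyl normalization -/
def Sz (a : PSpace d n) : ℤ := ∑ i, ((a.1 i * a.2 i).val : ℤ)

lemma Weyl_eq (a : PSpace d n) :
    Weyl d n a = tau d ^ (-(Sz d n a)) • (Zop d n a.1 * Xop d n a.2) := rfl

lemma smul_ZX (a : PSpace d n) :
    Zop d n a.1 * Xop d n a.2 = tau d ^ (Sz d n a) • Weyl d n a := by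
  rw [Weyl_eq, smul_smul, ← zpow_add₀ (tau_ne_zero d), add_neg_cancel, zpow_zero, one_smul]

lemma ZX_mul (a b : PSpace d n) :
    (Zop d n a.1 * Xop d n a.2) * (Zop d n b.1 * Xop d n b.2)
      = wch d (-(dt d n a.2 b.1)) • (Zop d n (a.1 + b.1) * Xop d n (a.2 + b.2)) := by
  calc (Zop d n a.1 * Xop d n a.2) * (Zop d n b.1 * Xop d n b.2)
      = Zop d n a.1 * (Xop d n a.2 * Zop d n b.1) * Xop d n b.2 := by
        rw [mul_assoc, mul_assoc, mul_assoc]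
    _ = wch d (-(dt d n a.2 b.1)) •
        (Zop d n a.1 * (Zop d n b.1 * Xop d n a.2) * Xop d n b.2) := by
        rw [X_mul_Z]
        rw [mul_smul_comm, smul_mul_assoc]
    _ = wch d (-(dt d n a.2 b.1)) • (Zop d n (a.1 + b.1) * Xop d n (a.2 + b.2)) := by
        rw [← mul_assoc, Zop_mul, mul_assoc, Xop_mul]

lemma Weyl_mul (a b : PSpace d n) :
    ∃ p : ℕ, Weyl d n a * Weyl d n b = tau d ^ p • Weyl d n (a + b) := by
  have hτ := tau_ne_zero d
  have key : Weyl d n a * Weyl d n b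
      = tau d ^ (-(Sz d n a) + -(Sz d n b) + 2 * ((-(dt d n a.2 b.1)).val : ℤ)
          + Sz d n (a + b)) • Weyl d n (a + b) := by
    rw [Weyl_eq d n a, Weyl_eq d n b, smul_mul_assoc, mul_smul_comm, ZX_mul]
    have : Zop d n (a.1 + b.1) * Xop d n (a.2 + b.2)
        = tau d ^ (Sz d n (a + b)) • Weyl d n (a + b) := smul_ZX d n (a + b)
    rw [this, wch_isTau, smul_smul, smul_smul, smul_smul]
    congr 1
    rw [zpow_add₀ hτ, zpow_add₀ hτ, zpow_add₀ hτ]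
    rw [show ((2 : ℤ) * ((-(dt d n a.2 b.1)).val : ℤ)) = ((2 * (-(dt d n a.2 b.1)).val : ℕ) : ℤ) by
      push_cast; ring]
    rw [zpow_natCast]
  obtain ⟨p, hp⟩ := tau_zpow_nat d (-(Sz d n a) + -(Sz d n b)
    + 2 * ((-(dt d n a.2 b.1)).val : ℤ) + Sz d n (a + b))
  exact ⟨p, by rw [key, hp]⟩

lemma Weyl_conjT (a : PSpace d n) :
    ∃ p : ℕ, (Weyl d n a)ᴴ = tau d ^ p • Weyl d n (-a) := by
  have hτ := tau_ne_zero d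
  have hZX : (Zop d n a.1 * Xop d n a.2)ᴴ
      = wch d (-(dt d n a.2 a.1)) • (Zop d n (-a.1) * Xop d n (-a.2)) := by
    rw [Matrix.conjTranspose_mul, Xop_conjT, Zop_conjT, X_mul_Z]
    congr 2
    rw [dt_neg_left, dt_neg_right, neg_neg]
  have key : (Weyl d n a)ᴴ
      = tau d ^ ((2 * d - 1 : ℕ) * (-(Sz d n a)) + 2 * ((-(dt d n a.2 a.1)).val : ℤ)
          + Sz d n (-a)) • Weyl d n (-a) := by
    rw [Weyl_eq d n a, Matrix.conjTranspose_smul, hZX]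
    have h1 : (Zop d n (-a.1) * Xop d n (-a.2)) = tau d ^ (Sz d n (-a)) • Weyl d n (-a) := by
      have := smul_ZX d n (-a); exact this
    rw [h1, smul_smul, smul_smul]
    congr 1
    rw [RCLike.star_def, map_zpow₀, star_tau, wch_isTau]
    rw [← zpow_natCast (tau d) (2 * d - 1), ← _root_.zpow_mul]
    rw [zpow_add₀ hτ, zpow_add₀ hτ]
    rw [show ((2 : ℤ) * ((-(dt d n a.2 a.1)).val : ℤ)) = ((2 * (-(dt d n a.2 a.1)).val : ℕ) : ℤ) by
      push_cast; ring]
    rw [zpow_natCast]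
  obtain ⟨p, hp⟩ := tau_zpow_nat d _
  exact ⟨p, by rw [key, hp]⟩

lemma Weyl_conjT_mul (a : PSpace d n) : (Weyl d n a)ᴴ * Weyl d n a = 1 := by
  rw [Weyl_eq, Matrix.conjTranspose_smul, smul_mul_assoc, mul_smul_comm, smul_smul]
  have h1 : (starRingEnd ℂ) (tau d ^ (-(Sz d n a))) * tau d ^ (-(Sz d n a)) = 1 := by
    rw [map_zpow₀, ← mul_zpow, star_tau_mul, _root_.one_zpow]
  rw [RCLike.star_def, h1]
  rw [Matrix.conjTranspose_mul, Xop_conjT, Zop_conjT]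
  rw [mul_assoc, ← mul_assoc (Zop d n (-a.1)), Zop_mul, neg_add_cancel, Zop_zero, one_mul,
    Xop_mul, neg_add_cancel, Xop_zero, one_smul]

lemma Weyl_mul_conjT (a : PSpace d n) : Weyl d n a * (Weyl d n a)ᴴ = 1 := by
  rw [Weyl_eq, Matrix.conjTranspose_smul, smul_mul_assoc, mul_smul_comm, smul_smul]
  have h1 : tau d ^ (-(Sz d n a)) * (starRingEnd ℂ) (tau d ^ (-(Sz d n a))) = 1 := by
    rw [map_zpow₀, ← mul_zpow, mul_comm (tau d), star_tau_mul, _root_.one_zpow]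
  rw [RCLike.star_def, h1]
  rw [Matrix.conjTranspose_mul, Xop_conjT, Zop_conjT]
  rw [mul_assoc, ← mul_assoc (Xop d n a.2), Xop_mul, add_neg_cancel, Xop_zero, one_mul,
    Zop_mul, add_neg_cancel, Zop_zero, one_smul]

lemma Weyl_unitary (a : PSpace d n) : Weyl d n a ∈ unitary (Mat d n) := by
  constructor
  · rw [Matrix.star_eq_conjTranspose, Weyl_conjT_mul]
  · rw [Matrix.star_eq_conjTranspose, Weyl_mul_conjT]

lemma Weyl_zero : Weyl d n 0 = 1 := by
  rw [Weyl_eq]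
  have h0 : Sz d n 0 = 0 := by simp [Sz]
  rw [h0, neg_zero, zpow_zero, one_smul]
  show Zop d n 0 * Xop d n 0 = 1
  rw [Zop_zero, Xop_zero, one_mul]
lemma dt_nsmul_right (a b : Fin n → ZMod d) (k : ℕ) :
    dt d n a (k • b) = (k : ZMod d) * dt d n a b := by
  simp only [dt, Pi.smul_apply, nsmul_eq_mul, Finset.mul_sum]
  congr 1
  funext i
  ring

lemma nsmul_vec_self (x : Fin n → ZMod d) : d • x = 0 := by
  funext i
  simp [nsmul_eq_mul, ZMod.natCast_self]

lemma valcast (x : ZMod d) : ((x.val : ℕ) : ZMod d) = x := ZMod.natCast_rightInverse x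

lemma ZX_pow (a : PSpace d n) (k : ℕ) :
    (Zop d n a.1 * Xop d n a.2) ^ k
      = wch d (-((∑ j ∈ Finset.range k, (j : ZMod d)) * dt d n a.2 a.1)) •
        (Zop d n (k • a.1) * Xop d n (k • a.2)) := by
  induction k with
  | zero => simp [wch_zero, Zop_zero, Xop_zero]
  | succ k ih =>
    rw [pow_succ', ih, mul_smul_comm]
    have hm := ZX_mul d n a (k • a.1, k • a.2)
    simp only at hm
    rw [hm, smul_smul, ← wch_add]
    have h1 : a.1 + k • a.1 = (k+1) • a.1 := by rw [succ_nsmul']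
    have h2 : a.2 + k • a.2 = (k+1) • a.2 := by rw [succ_nsmul']
    rw [h1, h2]
    congr 2
    rw [dt_nsmul_right, Finset.sum_range_succ]
    ring

lemma tau_pow_d_odd (h : Odd d) : tau d ^ d = 1 := by
  rw [tau, mul_pow, ← Complex.exp_nat_mul,
    show (d : ℂ) * ((Real.pi:ℂ) * Complex.I / d) = (Real.pi:ℂ) * Complex.I by
      rw [mul_div_assoc']
      exact mul_div_cancel_left₀ _ (Nat.cast_ne_zero.mpr (NeZero.ne d)),
    Complex.exp_pi_mul_I, h.neg_one_pow, h.neg_one_pow, neg_mul_neg, one_mul]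

lemma omg_two : omg 2 = -1 := by
  rw [omg, show (2 * (Real.pi:ℂ) * Complex.I / (2:ℕ)) = (Real.pi:ℂ) * Complex.I by
    push_cast; ring, Complex.exp_pi_mul_I]

lemma sum_range_cast_zero (h : Odd d) : (∑ j ∈ Finset.range d, (j : ZMod d)) = 0 := by
  have hcast : (∑ j ∈ Finset.range d, (j : ZMod d)) = ((∑ j ∈ Finset.range d, j : ℕ) : ZMod d) := by
    rw [Nat.cast_sum]
  obtain ⟨m, hm⟩ := h
  have hsum : (∑ j ∈ Finset.range d, j) = d * m := by
    have h2 := Finset.sum_range_id_mul_two d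
    have h3 : d - 1 = 2 * m := by omega
    rw [h3] at h2
    have h4 : d * (2 * m) = d * m * 2 := by ring
    rw [h4] at h2
    omega
  rw [hcast, hsum, Nat.cast_mul, ZMod.natCast_self, zero_mul]

lemma Weyl_pow_d (hdp : d = 2 ∨ Odd d) (a : PSpace d n) : Weyl d n a ^ d = 1 := by
  rw [Weyl_eq, smul_pow, ZX_pow, nsmul_vec_self, nsmul_vec_self, Zop_zero, Xop_zero, one_mul]
  rcases hdp with h2 | hodd
  · subst h2
    rw [smul_smul]
    have hsum : (∑ j ∈ Finset.range 2, (j : ZMod 2)) = 1 := by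
      simp [Finset.sum_range_succ]
    rw [hsum, one_mul]
    set s := dt 2 n a.2 a.1 with hs
    have hneg : ∀ t : ZMod 2, -t = t := fun t => CharTwo.neg_eq t
    rw [hneg s]
    set S : ℕ := ∑ i, (a.1 i * a.2 i).val with hS
    have hSz : Sz 2 n a = (S : ℤ) := by rw [Sz, hS]; push_cast; rfl
    have hpow1 : (tau 2 ^ (-(Sz 2 n a))) ^ 2 = (-1 : ℂ) ^ S := by
      rw [← zpow_natCast ((tau 2) ^ (-(Sz 2 n a))), ← _root_.zpow_mul,
        show (-(Sz 2 n a)) * ((2:ℕ):ℤ) = (2 : ℤ) * (-(Sz 2 n a)) by ring,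
        _root_.zpow_mul, show ((2:ℤ)) = ((2:ℕ):ℤ) by norm_num, zpow_natCast, tau_sq, omg_two,
        hSz, _root_.zpow_neg, zpow_natCast]
      exact inv_eq_of_mul_eq_one_right (by rw [← mul_pow]; norm_num)
    have hpow2 : wch 2 s = (-1 : ℂ) ^ s.val := by rw [wch, omg_two]
    rw [hpow1, hpow2, ← pow_add]
    have hcastS : ((S : ℕ) : ZMod 2) = s := by
      rw [hS, hs, Nat.cast_sum, dt]
      refine Finset.sum_congr rfl fun i _ => ?_
      rw [valcast]
      ring
    have heven : Even (S + s.val) := by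
      rw [even_iff_two_dvd]
      rw [← ZMod.natCast_eq_zero_iff]
      push_cast
      rw [hcastS, valcast, CharTwo.add_self_eq_zero]
    rw [heven.neg_one_pow, one_smul]
  · rw [sum_range_cast_zero d hodd, zero_mul, neg_zero, wch_zero, one_smul]
    rw [← zpow_natCast ((tau d) ^ (-(Sz d n a))), ← _root_.zpow_mul]
    rw [show (-(Sz d n a)) * ((d:ℕ):ℤ) = ((d:ℕ):ℤ) * (-(Sz d n a)) by ring]
    rw [_root_.zpow_mul, zpow_natCast, tau_pow_d_odd d hodd, _root_.one_zpow, one_smul]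
lemma Weyl_mem_pauli (a : PSpace d n) : Weyl d n a ∈ pauliGroup d n :=
  ⟨0, a, by rw [pow_zero, one_smul]⟩

lemma pauli_mul {P Q : Mat d n} (hP : P ∈ pauliGroup d n) (hQ : Q ∈ pauliGroup d n) :
    P * Q ∈ pauliGroup d n := by
  obtain ⟨p, a, rfl⟩ := hP
  obtain ⟨q, b, rfl⟩ := hQ
  obtain ⟨r, hr⟩ := Weyl_mul d n a b
  refine ⟨p + q + r, a + b, ?_⟩
  rw [smul_mul_assoc, mul_smul_comm, hr, smul_smul, smul_smul, pow_add, pow_add]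

lemma pauli_conjT {P : Mat d n} (hP : P ∈ pauliGroup d n) : Pᴴ ∈ pauliGroup d n := by
  obtain ⟨p, a, rfl⟩ := hP
  obtain ⟨q, hq⟩ := Weyl_conjT d n a
  refine ⟨(2 * d - 1) * p + q, -a, ?_⟩
  rw [Matrix.conjTranspose_smul, hq, smul_smul, RCLike.star_def, map_pow, star_tau,
    ← pow_mul, ← pow_add]

lemma star_tau_pow_mul (p : ℕ) : (starRingEnd ℂ) (tau d ^ p) * tau d ^ p = 1 := by
  rw [map_pow, ← mul_pow, star_tau_mul, one_pow]

lemma pauli_unitary {P : Mat d n} (hP : P ∈ pauliGroup d n) : P ∈ unitary (Mat d n) := by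
  obtain ⟨p, a, rfl⟩ := hP
  constructor
  · rw [star_smul, Matrix.star_eq_conjTranspose, smul_mul_assoc, mul_smul_comm, smul_smul,
      Weyl_conjT_mul, RCLike.star_def, star_tau_pow_mul, one_smul]
  · rw [star_smul, Matrix.star_eq_conjTranspose, smul_mul_assoc, mul_smul_comm, smul_smul,
      Weyl_mul_conjT, RCLike.star_def, mul_comm, star_tau_pow_mul, one_smul]

lemma cliff_one_eq : cliff d n 1 = pauliGroup d n := rfl

lemma cliff_two_mem (k : ℕ) (U : Mat d n) :
    U ∈ cliff d n (k + 2) ↔ U ∈ unitary (Mat d n) ∧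
      ∀ P ∈ pauliGroup d n, U * P * Uᴴ ∈ cliff d n (k + 1) := Iff.rfl

lemma cliff_mul_pauli : ∀ m, ∀ V ∈ cliff d n (m+1), ∀ P ∈ pauliGroup d n,
    P * V ∈ cliff d n (m+1) ∧ V * P ∈ cliff d n (m+1) := by
  intro m
  induction m with
  | zero =>
    intro V hV P hP
    exact ⟨pauli_mul d n hP hV, pauli_mul d n hV hP⟩
  | succ m ih =>
    intro V hV P hP
    obtain ⟨hVu, hVc⟩ := hV
    constructor
    · refine ⟨mul_mem (pauli_unitary d n hP) hVu, ?_⟩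
      intro Q hQ
      have hre : (P * V) * Q * (P * V)ᴴ = P * (V * Q * Vᴴ) * Pᴴ := by
        rw [Matrix.conjTranspose_mul]
        simp only [mul_assoc]
      rw [hre]
      have h1 := hVc Q hQ
      have h2 := (ih _ h1 P hP).1
      exact (ih _ h2 _ (pauli_conjT d n hP)).2
    · refine ⟨mul_mem hVu (pauli_unitary d n hP), ?_⟩
      intro Q hQ
      have hre : (V * P) * Q * (V * P)ᴴ = V * (P * Q * Pᴴ) * Vᴴ := by
        rw [Matrix.conjTranspose_mul]
        simp only [mul_assoc]
      rw [hre]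
      exact hVc _ (pauli_mul d n (pauli_mul d n hP hQ) (pauli_conjT d n hP))

lemma pderiv_smul (h : PSpace d n) (c : ℂ) (hc : c * (starRingEnd ℂ) c = 1) (U : Mat d n) :
    pderiv d n h (c • U) = pderiv d n h U := by
  rw [pderiv, pderiv, Matrix.conjTranspose_smul]
  simp only [smul_mul_assoc, mul_smul_comm, smul_smul, RCLike.star_def]
  first
  | rw [hc, one_smul]
  | rw [mul_comm c ((starRingEnd ℂ) c), mul_comm ((starRingEnd ℂ) c) c, hc, one_smul]
  | (rw [show (starRingEnd ℂ) c * c = 1 by rw [mul_comm]; exact hc, one_smul])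

lemma pderiv_of_pauli (h : PSpace d n) {P : Mat d n} (hP : P ∈ pauliGroup d n) :
    ∃ θ : ℝ, pderiv d n h P = Complex.exp (θ * Complex.I) • (1 : Mat d n) := by
  obtain ⟨p, a, rfl⟩ := hP
  obtain ⟨p1, hp1⟩ := Weyl_mul d n h a
  obtain ⟨p2, hp2⟩ := Weyl_mul d n a h
  have hca : (tau d ^ p * (starRingEnd ℂ) (tau d ^ p)) = 1 := by
    rw [mul_comm]; exact star_tau_pow_mul d p
  have key : pderiv d n h (tau d ^ p • Weyl d n a)
      = (tau d ^ p1 * ((starRingEnd ℂ) (tau d ^ p2))) • (1 : Mat d n) := by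
    rw [pderiv_smul d n h _ hca, pderiv]
    have hassoc : Weyl d n h * Weyl d n a * (Weyl d n h)ᴴ * (Weyl d n a)ᴴ
        = (Weyl d n h * Weyl d n a) * ((Weyl d n a * Weyl d n h)ᴴ) := by
      rw [Matrix.conjTranspose_mul]
      simp only [mul_assoc]
    rw [hassoc, hp1, hp2, Matrix.conjTranspose_smul, mul_smul_comm, smul_mul_assoc, smul_smul,
      show a + h = h + a from add_comm a h, Weyl_mul_conjT, RCLike.star_def,
      mul_comm ((starRingEnd ℂ) (tau d ^ p2)) (tau d ^ p1)]
  rw [key, map_pow, star_tau, ← pow_mul, ← pow_add]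
  obtain ⟨θ, hθ⟩ := tau_pow_exp d (p1 + (2 * d - 1) * p2)
  exact ⟨θ, by rw [hθ]⟩

lemma cliff_subset_ppoly : ∀ m, cliff d n (m+1) ⊆ ppoly d n (m+1) := by
  intro m
  induction m with
  | zero =>
    intro V hV
    exact ⟨pauli_unitary d n hV, fun h => pderiv_of_pauli d n h hV⟩
  | succ m ih =>
    rintro V ⟨hVu, hVc⟩
    refine ⟨hVu, fun h => ?_⟩
    obtain ⟨q, hq⟩ := Weyl_conjT d n h
    have h1 : V * (Weyl d n h)ᴴ * Vᴴ ∈ cliff d n (m+1) := by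
      refine hVc _ ⟨q, -h, hq⟩
    have h2 : pderiv d n h V = Weyl d n h * (V * (Weyl d n h)ᴴ * Vᴴ) := by
      rw [pderiv]
      simp only [mul_assoc]
    rw [h2]
    exact ih ((cliff_mul_pauli d n m _ h1 _ (Weyl_mem_pauli d n h)).1)
lemma wch_inv (x : ZMod d) : (wch d x)⁻¹ = wch d (-x) :=
  inv_eq_of_mul_eq_one_right (wch_neg_mul d x)

lemma dt_sub_left (a b c : Fin n → ZMod d) : dt d n (a - b) c = dt d n a c - dt d n b c := by
  rw [sub_eq_add_neg, dt_add_left, dt_neg_left, sub_eq_add_neg]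

lemma dt_sub_right (a b c : Fin n → ZMod d) : dt d n a (b - c) = dt d n a b - dt d n a c := by
  rw [sub_eq_add_neg, dt_add_right, dt_neg_right, sub_eq_add_neg]

lemma Weyl_u0 (u : Fin n → ZMod d) : Weyl d n (u, 0) = Zop d n u := by
  rw [Weyl_eq]
  have h0 : Sz d n ((u, 0) : PSpace d n) = 0 := by simp [Sz]
  rw [h0, neg_zero, zpow_zero, one_smul]
  show Zop d n u * Xop d n 0 = Zop d n u
  rw [Xop_zero, mul_one]

lemma Weyl_0v (v : Fin n → ZMod d) : Weyl d n (0, v) = Xop d n v := by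
  rw [Weyl_eq]
  have h0 : Sz d n ((0, v) : PSpace d n) = 0 := by simp [Sz]
  rw [h0, neg_zero, zpow_zero, one_smul]
  show Zop d n 0 * Xop d n v = Xop d n v
  rw [Zop_zero, one_mul]

lemma Xop_mul_apply (v : Fin n → ZMod d) (M : Mat d n) (a b : Fin n → ZMod d) :
    (Xop d n v * M) a b = M (a - v) b := by
  rw [Matrix.mul_apply]
  simp only [Xop, Matrix.of_apply]
  rw [Finset.sum_eq_single (a - v)]
  · rw [if_pos (by abel)]
    exact one_mul _
  · intro c _ hc
    rw [if_neg, zero_mul]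
    intro hac
    exact hc (by rw [hac]; abel)
  · intro hmem
    exact absurd (Finset.mem_univ _) hmem

lemma mul_Xop_apply (v : Fin n → ZMod d) (M : Mat d n) (a b : Fin n → ZMod d) :
    (M * Xop d n v) a b = M a (b + v) := by
  rw [Matrix.mul_apply]
  simp only [Xop, Matrix.of_apply]
  rw [Finset.sum_eq_single (b + v)]
  · rw [if_pos rfl, mul_one]
  · intro c _ hc
    rw [if_neg hc, mul_zero]
  · intro hmem
    exact absurd (Finset.mem_univ _) hmem

lemma hom_finset_sum {ι : Type*} {A : Type*} [AddCommMonoid A] (F : A → ℂ)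
    (h1 : F 0 = 1) (hm : ∀ x y, F (x + y) = F x * F y) (t : Finset ι) (g : ι → A) :
    F (∑ i ∈ t, g i) = ∏ i ∈ t, F (g i) := by
  classical
  induction t using Finset.induction with
  | empty => simpa
  | insert _ _ hx ih => rw [Finset.sum_insert hx, Finset.prod_insert hx, hm, ih]

lemma single_eq_val_smul (v : Fin n → ZMod d) (i : Fin n) :
    Pi.single i (v i) = (v i).val • Pi.single (M := fun _ => ZMod d) i 1 := by
  funext k
  rw [Pi.smul_apply]
  by_cases hk : k = i
  · subst hk
    rw [Pi.single_eq_same, Pi.single_eq_same, nsmul_eq_mul, mul_one, valcast]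
  · rw [Pi.single_eq_of_ne hk, Pi.single_eq_of_ne hk, smul_zero]

lemma mem_ppoly_one {V : Mat d n} (hV : V ∈ ppoly d n 1) :
    ∃ (c : ℂ) (g : PSpace d n), c ≠ 0 ∧ V = c • Weyl d n g := by
  obtain ⟨hVu, hder⟩ := hV
  have hV1 : Vᴴ * V = 1 := by
    have := hVu.1; rwa [Matrix.star_eq_conjTranspose] at this
  have hV2 : V * Vᴴ = 1 := by
    have := hVu.2; rwa [Matrix.star_eq_conjTranspose] at this
  -- commutation scalars
  have key : ∀ h : PSpace d n, ∃ c : ℂ, c ≠ 0 ∧ Weyl d n h * V = c • (V * Weyl d n h) := by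
    intro h
    obtain ⟨θ, hθ⟩ := hder h
    refine ⟨Complex.exp (θ * Complex.I), Complex.exp_ne_zero _, ?_⟩
    have h1 : Weyl d n h * V * (Weyl d n h)ᴴ * Vᴴ = Complex.exp (θ * Complex.I) • 1 := hθ
    have h2 : Weyl d n h * V * (Weyl d n h)ᴴ * Vᴴ * V = Complex.exp (θ * Complex.I) • V := by
      rw [h1, smul_mul_assoc, one_mul]
    rw [mul_assoc _ Vᴴ V, hV1, mul_one] at h2
    have h3 := congrArg (fun M => M * Weyl d n h) h2
    rw [mul_assoc _ (Weyl d n h)ᴴ (Weyl d n h), Weyl_conjT_mul, mul_one, smul_mul_assoc] at h3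
    exact h3
  choose c hc0 hcm using key
  -- a nonzero entry
  have hVne : ∃ a b : Fin n → ZMod d, V a b ≠ 0 := by
    by_contra hno
    push_neg at hno
    have hz : V = 0 := Matrix.ext fun a b => hno a b
    rw [hz, Matrix.zero_mul] at hV2
    have h00 : (0 : Mat d n) (fun _ => 0) (fun _ => 0) = (1 : Mat d n) (fun _ => 0) (fun _ => 0) := by
      rw [hV2]
    rw [Matrix.zero_apply, Matrix.one_apply_eq] at h00
    exact zero_ne_one h00
  obtain ⟨a₀, b₀, hab0⟩ := hVne
  -- the Z-direction scalars
  have hzc : ∀ (u : Fin n → ZMod d) (a b : Fin n → ZMod d), V a b ≠ 0 →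
      c (u, 0) = wch d (dt d n (a - b) u) := by
    intro u a b hab
    have heq := hcm (u, 0)
    rw [Weyl_u0] at heq
    have hent : (Zop d n u * V) a b = (c (u, 0) • (V * Zop d n u)) a b := by rw [heq]
    rw [Zop_eq, Matrix.diagonal_mul, Matrix.smul_apply, Matrix.mul_diagonal] at hent
    have hx : wch d (dt d n (a - b) u) * wch d (dt d n b u) = wch d (dt d n a u) := by
      rw [← wch_add]
      congr 1
      rw [dt_sub_left]
      ring
    have h5 : c (u, 0) * (V a b * wch d (dt d n b u))
        = wch d (dt d n (a - b) u) * (V a b * wch d (dt d n b u)) := by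
      rw [smul_eq_mul] at hent
      rw [← hent, ← hx]
      ring
    exact mul_right_cancel₀ (mul_ne_zero hab (wch_ne_zero _ _)) h5
  set w : Fin n → ZMod d := a₀ - b₀ with hw
  have hsupp : ∀ a b : Fin n → ZMod d, V a b ≠ 0 → a = b + w := by
    intro a b hab
    have hdall : ∀ u, wch d (dt d n (a - b) u) = wch d (dt d n w u) := by
      intro u
      rw [← hzc u a b hab, hzc u a₀ b₀ hab0]
    have hdz : a - b - w = 0 := by
      funext i
      have h7 : wch d (dt d n (a - b - w) (Pi.single i 1)) = 1 := by
        rw [dt_sub_left, sub_eq_add_neg, wch_add, ← dt_neg_left, hdall,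
          ← wch_add, dt_neg_left, add_neg_cancel, wch_zero]
      have h8 := wch_eq_one d h7
      rw [dt_single] at h8
      exact h8
    have h9 : a - b = w := by
      have := sub_eq_zero.mp hdz
      exact this
    rw [← h9]
    abel
  -- the X-direction recursion
  have hxe : ∀ (v a b : Fin n → ZMod d), V (a - v) b = c (0, v) * V a (b + v) := by
    intro v a b
    have heq := hcm (0, v)
    rw [Weyl_0v] at heq
    have hent : (Xop d n v * V) a b = (c (0, v) • (V * Xop d n v)) a b := by rw [heq]
    rw [Xop_mul_apply, Matrix.smul_apply, mul_Xop_apply, smul_eq_mul] at hent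
    exact hent
  set f : (Fin n → ZMod d) → ℂ := fun b => V (b + w) b with hfdef
  have hf : ∀ b v, f b = c (0, v) * f (b + v) := by
    intro b v
    have := hxe v (b + w + v) b
    rw [show b + w + v - v = b + w by abel] at this
    rw [show b + w + v = (b + v) + w by abel] at this
    exact this
  have hf0 : f b₀ ≠ 0 := by
    show V (b₀ + w) b₀ ≠ 0
    rw [show b₀ + w = a₀ by rw [hw]; abel]
    exact hab0
  have hfne : ∀ b, f b ≠ 0 := by
    intro b hb
    have := hf b₀ (b - b₀)
    rw [show b₀ + (b - b₀) = b by abel, hb, mul_zero] at this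
    exact hf0 this
  have hcx1 : c ((0 : Fin n → ZMod d), (0 : Fin n → ZMod d)) = 1 := by
    have := hf b₀ 0
    rw [add_zero] at this
    have h5 : c (0, 0) * f b₀ = 1 * f b₀ := by rw [one_mul, ← this]
    exact mul_right_cancel₀ hf0 h5
  have hcxm : ∀ v v' : Fin n → ZMod d, c (0, v + v') = c (0, v) * c (0, v') := by
    intro v v'
    have h1 := hf b₀ (v + v')
    have h2 := hf b₀ v
    have h3 := hf (b₀ + v) v'
    rw [h3, show b₀ + v + v' = b₀ + (v + v') by abel] at h2
    rw [h1, ← mul_assoc] at h2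
    exact mul_right_cancel₀ (hfne _) h2
  have hcxpow : ∀ (v : Fin n → ZMod d) (k : ℕ), c (0, k • v) = c (0, v) ^ k := by
    intro v k
    induction k with
    | zero => rw [zero_smul, pow_zero]; exact hcx1
    | succ k ih => rw [succ_nsmul', hcxm, ih, pow_succ']
  have hcxd : ∀ v : Fin n → ZMod d, c (0, v) ^ d = 1 := by
    intro v
    rw [← hcxpow, nsmul_vec_self]
    exact hcx1
  have hroot : ∀ i : Fin n, ∃ j : ℕ, omg d ^ j = c (0, Pi.single i 1) := by
    intro i
    obtain ⟨j, _, hj⟩ := (Complex.isPrimitiveRoot_exp d (NeZero.ne d)).eq_pow_of_pow_eq_one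
      (hcxd (Pi.single i 1))
    exact ⟨j, hj⟩
  choose jf hjf using hroot
  set s : Fin n → ZMod d := fun i => ((jf i : ℕ) : ZMod d) with hs
  have hchar : ∀ v : Fin n → ZMod d, c (0, v) = wch d (dt d n s v) := by
    intro v
    have hstep1 : c (0, v) = ∏ i, c (0, Pi.single i (v i)) := by
      conv_lhs => rw [show v = ∑ i, Pi.single i (v i) from (Finset.univ_sum_single v).symm]
      exact hom_finset_sum (fun x => c (0, x)) hcx1 hcxm Finset.univ _
    have hstep2 : ∀ i, c (0, Pi.single i (v i)) = omg d ^ (jf i * (v i).val) := by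
      intro i
      rw [single_eq_val_smul, hcxpow, ← hjf i, ← pow_mul]
    rw [hstep1]
    rw [Finset.prod_congr rfl (fun i _ => hstep2 i)]
    rw [Finset.prod_pow_eq_pow_sum]
    rw [wch]
    apply omg_pow_congr
    push_cast [valcast]
    first
    | rfl
    | (rw [dt]; exact Finset.sum_congr rfl fun i _ => rfl)
    | rfl
  -- assemble
  refine ⟨f b₀ * wch d (dt d n s b₀) * wch d (dt d n s w) * tau d ^ (Sz d n ((-s, w) : PSpace d n)),
    (-s, w), ?_, ?_⟩
  · exact mul_ne_zero (mul_ne_zero (mul_ne_zero hf0 (wch_ne_zero _ _)) (wch_ne_zero _ _))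
      (zpow_ne_zero _ (tau_ne_zero d))
  · ext a b
    rw [Matrix.smul_apply, Weyl_eq, Matrix.smul_apply]
    have hZXent : (Zop d n (-s) * Xop d n w) a b
        = wch d (dt d n a (-s)) * (if a = b + w then 1 else 0) := by
      rw [Zop_eq, Matrix.diagonal_mul]
      rfl
    show V a b = _ * (tau d ^ (-(Sz d n ((-s, w) : PSpace d n))) * (Zop d n (-s) * Xop d n w) a b)
    rw [hZXent]
    by_cases hcase : a = b + w
    · rw [if_pos hcase, mul_one]
      have hVab : V a b = f b := by rw [hcase]
      have hfb : f b = wch d (dt d n s (b₀ - b)) * f b₀ := by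
        have := hf b (b₀ - b)
        rw [show b + (b₀ - b) = b₀ by abel] at this
        rw [this, hchar]
      rw [hVab, hfb, hcase]
      have htau : tau d ^ (Sz d n ((-s, w) : PSpace d n))
          * tau d ^ (-(Sz d n ((-s, w) : PSpace d n))) = 1 := by
        rw [← zpow_add₀ (tau_ne_zero d), add_neg_cancel, zpow_zero]
      have hwchs : wch d (dt d n s b₀) * wch d (dt d n s w) * wch d (dt d n (b + w) (-s))
          = wch d (dt d n s (b₀ - b)) := by
        rw [← wch_add, ← wch_add]
        congr 1
        simp only [dt_neg_right, dt_add_left, dt_sub_right, dt_sub_left,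
          dt_comm d n b s, dt_comm d n w s, hw]
        rw [dt_comm d n a₀ s, dt_comm d n b₀ s]
        ring
      calc wch d (dt d n s (b₀ - b)) * f b₀
          = (f b₀ * wch d (dt d n s b₀) * wch d (dt d n s w) * tau d ^ (Sz d n ((-s, w) : PSpace d n)))
            * (tau d ^ (-(Sz d n ((-s, w) : PSpace d n))) * wch d (dt d n (b + w) (-s))) := by
            rw [mul_comm (tau d ^ (-(Sz d n ((-s, w) : PSpace d n)))) (wch d (dt d n (b + w) (-s)))]
            rw [show (f b₀ * wch d (dt d n s b₀) * wch d (dt d n s w) * tau d ^ (Sz d n ((-s, w) : PSpace d n)))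
                * (wch d (dt d n (b + w) (-s)) * tau d ^ (-(Sz d n ((-s, w) : PSpace d n))))
                = (wch d (dt d n s b₀) * wch d (dt d n s w) * wch d (dt d n (b + w) (-s))) * f b₀
                  * (tau d ^ (Sz d n ((-s, w) : PSpace d n)) * tau d ^ (-(Sz d n ((-s, w) : PSpace d n)))) by ring]
            rw [hwchs, htau, mul_one]
        _ = _ := by ring
    · rw [if_neg hcase, mul_zero, mul_zero, mul_zero]
      by_contra hne
      exact hcase (hsupp a b hne)
lemma conj_weyl_eq (U : Mat d n) (hU1 : Uᴴ * U = 1) (b : PSpace d n) :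
    U * Weyl d n b * Uᴴ = Weyl d n b * pderiv d n (-b) U := by
  obtain ⟨q, hq⟩ := Weyl_conjT d n (-b)
  rw [neg_neg] at hq
  have hid : U * (Weyl d n (-b))ᴴ * Uᴴ = (Weyl d n (-b))ᴴ * pderiv d n (-b) U := by
    rw [pderiv, ← mul_assoc, ← mul_assoc, ← mul_assoc, Weyl_conjT_mul, one_mul]
  rw [hq] at hid
  rw [mul_smul_comm, smul_mul_assoc, smul_mul_assoc] at hid
  have hne : (tau d ^ q : ℂ) ≠ 0 := pow_ne_zero _ (tau_ne_zero d)
  have := congrArg (fun M => (tau d ^ q)⁻¹ • M) hid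
  simp only [inv_smul_smul₀ hne] at this
  exact this

lemma conj_pow (U A : Mat d n) (hU1 : Uᴴ * U = 1) (hU2 : U * Uᴴ = 1) (k : ℕ) :
    (U * A * Uᴴ) ^ k = U * A ^ k * Uᴴ := by
  induction k with
  | zero => rw [pow_zero, pow_zero, mul_one, hU2]
  | succ k ih =>
    rw [pow_succ, pow_succ, ih]
    calc (U * A ^ k * Uᴴ) * (U * A * Uᴴ) = U * (A ^ k * ((Uᴴ * U) * (A * Uᴴ))) := by
          simp only [mul_assoc]
      _ = U * (A ^ k * A) * Uᴴ := by rw [hU1, one_mul]; simp only [mul_assoc]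

lemma smul_one_eq_one {r : ℂ} (h : r • (1 : Mat d n) = 1) : r = 1 := by
  have h2 : (r • (1 : Mat d n)) (fun _ => 0) (fun _ => 0)
      = (1 : Mat d n) (fun _ => 0) (fun _ => 0) := by rw [h]
  rw [Matrix.smul_apply, Matrix.one_apply_eq, smul_eq_mul, mul_one] at h2
  exact h2

lemma ppoly_two_subset (hdp : d = 2 ∨ Odd d) : ppoly d n 2 ⊆ cliff d n 2 := by
  rintro U ⟨hUu, hder⟩
  have hU1 : Uᴴ * U = 1 := by
    have := hUu.1; rwa [Matrix.star_eq_conjTranspose] at this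
  have hU2 : U * Uᴴ = 1 := by
    have := hUu.2; rwa [Matrix.star_eq_conjTranspose] at this
  refine ⟨hUu, ?_⟩
  rintro P ⟨p, b, rfl⟩
  obtain ⟨cV, g, hc0, hVg⟩ := mem_ppoly_one d n (hder (-b))
  have hconj := conj_weyl_eq d n U hU1 b
  rw [hVg] at hconj
  obtain ⟨p1, hp1⟩ := Weyl_mul d n b g
  have hUWb : U * Weyl d n b * Uᴴ = (cV * tau d ^ p1) • Weyl d n (b + g) := by
    rw [hconj, mul_smul_comm, hp1, smul_smul]
  have hrd : (cV * tau d ^ p1) ^ d = 1 := by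
    have h1 := conj_pow d n U (Weyl d n b) hU1 hU2 d
    rw [Weyl_pow_d d n hdp, mul_one, hU2, hUWb, smul_pow, Weyl_pow_d d n hdp] at h1
    exact smul_one_eq_one d n h1
  obtain ⟨jj, _, hjj⟩ := (Complex.isPrimitiveRoot_exp d (NeZero.ne d)).eq_pow_of_pow_eq_one hrd
  refine ⟨p + 2 * jj, b + g, ?_⟩
  rw [show U * (tau d ^ p • Weyl d n b) * Uᴴ = tau d ^ p • (U * Weyl d n b * Uᴴ) by
    rw [mul_smul_comm, smul_mul_assoc]]
  rw [hUWb, smul_smul, ← hjj,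
    show Complex.exp (2 * Real.pi * Complex.I / d) = omg d from rfl,
    ← tau_sq, ← pow_mul, ← pow_add]

lemma ppoly_succ_subset (k : ℕ) (ih : ppoly d n (k+1) = cliff d n (k+1)) :
    ppoly d n (k+2) ⊆ cliff d n (k+2) := by
  rintro U ⟨hUu, hder⟩
  have hU1 : Uᴴ * U = 1 := by
    have := hUu.1; rwa [Matrix.star_eq_conjTranspose] at this
  refine ⟨hUu, ?_⟩
  rintro P ⟨p, b, rfl⟩
  have hDb : pderiv d n (-b) U ∈ cliff d n (k+1) := ih ▸ hder (-b)
  have h1 : U * Weyl d n b * Uᴴ ∈ cliff d n (k+1) := by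
    rw [conj_weyl_eq d n U hU1 b]
    exact (cliff_mul_pauli d n k _ hDb _ (Weyl_mem_pauli d n b)).1
  have h2 : U * (tau d ^ p • Weyl d n b) * Uᴴ
      = (tau d ^ p • (1 : Mat d n)) * (U * Weyl d n b * Uᴴ) := by
    rw [mul_smul_comm, smul_mul_assoc, smul_mul_assoc, one_mul]
  rw [h2]
  exact (cliff_mul_pauli d n k _ h1 _ ⟨p, 0, by rw [Weyl_zero]⟩).1

theorem stmt9 (d n : ℕ) [NeZero d] (hd : d.Prime) (hn : 1 ≤ n)
    (k : ℕ) (hk : 2 ≤ k) :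
    ppoly d n k = cliff d n k := by
  have hdp : d = 2 ∨ Odd d := hd.eq_two_or_odd'
  induction k, hk using Nat.le_induction with
  | base =>
    apply Set.Subset.antisymm
    · exact ppoly_two_subset d n hdp
    · exact cliff_subset_ppoly d n 1
  | succ k hk ih =>
    apply Set.Subset.antisymm
    · obtain ⟨k', rfl⟩ : ∃ k', k = k' + 1 := ⟨k - 1, by omega⟩
      exact ppoly_succ_subset d n k' ih
    · exact cliff_subset_ppoly d n k

end CH
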